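/- The q-bracket of the partition sum-of-divisors function σ(λ) := ∑_{δ|λ} n_δ equals ∑_{λ∈P} n_λ q^{|λ|}; equivalently, for every integer n ≥ 0, ∑_{λ⊢n} σ(λ) = ∑_{k=0}^{n} (∑_{δ⊢k} n_δ) · p(n−k). -/

import Mathlib

/-- The set of partition divisors (sub-partitions) of `l`. -/
def pdivisors (l : Multiset ℕ+) : Finset (Multiset ℕ+) := l.powerset.toFinset

/-- Partition-theoretic Möbius function. -/
def pmu (l : Multiset ℕ+) : ℂ := if l.Nodup then (-1 : ℂ) ^ (Multiset.card l) else 0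

/-- The "integer" of a partition: the product of its parts. -/
def nInt (l : Multiset ℕ+) : ℕ := (l.map (fun a => (a : ℕ))).prod

/-- Partition-theoretic phi function. -/
noncomputable def pphi (l : Multiset ℕ+) : ℂ :=
  (nInt l : ℂ) * ∏ a ∈ l.toFinset, (1 - (a : ℂ)⁻¹)

/-- Convert a `Nat.Partition n` to a multiset of positive integers. -/
def toPtn {n : ℕ} (p : n.Partition) : Multiset ℕ+ :=
  p.parts.pmap (fun x hx => ⟨x, hx⟩) (fun _ hx => p.parts_pos hx)

/-- The partition function `p(n)`. -/
def partcount (n : ℕ) : ℕ := Fintype.card (Nat.Partition n)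

/-- A partition lies in `P₌` iff it is nonempty with all parts equal. -/
def isPeq (l : Multiset ℕ+) : Prop :=
  ∃ (a : ℕ+) (k : ℕ), 0 < k ∧ l = Multiset.replicate k a

/-- sum of a pnat multiset -/
def sumM (l : Multiset ℕ+) : ℕ := (l.map (fun a : ℕ+ => (a : ℕ))).sum

lemma map_toPtn {n : ℕ} (p : n.Partition) :
    (toPtn p).map (fun a : ℕ+ => (a : ℕ)) = p.parts := by
  simp [toPtn, Multiset.map_pmap, Multiset.pmap_eq_map]
  exact (Multiset.map_pmap _ _ _ _).trans ((Multiset.pmap_eq_map _ (fun a => a) _ _).trans (Multiset.map_id' _))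

lemma sumM_toPtn {n : ℕ} (p : n.Partition) : sumM (toPtn p) = n := by
  simp only [sumM]
  rw [map_toPtn, p.parts_sum]

lemma toPtn_injective {n : ℕ} : Function.Injective (toPtn (n := n)) := by
  intro p q h
  have hp : p.parts = q.parts := by rw [← map_toPtn p, ← map_toPtn q, h]
  exact Nat.Partition.ext hp

def Pn (n : ℕ) : Finset (Multiset ℕ+) := Finset.univ.image (toPtn (n := n))

lemma mem_Pn {n : ℕ} {l : Multiset ℕ+} : l ∈ Pn n ↔ sumM l = n := by
  constructor
  · rintro h
    rw [Pn, Finset.mem_image] at h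
    obtain ⟨p, _, rfl⟩ := h
    exact sumM_toPtn p
  · intro h
    have hpos : ∀ x ∈ l.map (fun a : ℕ+ => (a : ℕ)), 0 < x := by
      intro x hx
      obtain ⟨a, _, rfl⟩ := Multiset.mem_map.mp hx
      exact a.pos
    refine Finset.mem_image.mpr
      ⟨⟨l.map (fun a : ℕ+ => (a : ℕ)), fun {x} hx => hpos x hx, h⟩, Finset.mem_univ _, ?_⟩
    apply Multiset.map_injective (f := fun a : ℕ+ => (a : ℕ)) (fun a b hab => PNat.coe_injective hab)
    rw [map_toPtn]

lemma sum_Pn {n : ℕ} (f : Multiset ℕ+ → ℕ) :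
    (∑ p : n.Partition, f (toPtn p)) = ∑ l ∈ Pn n, f l :=
  (Finset.sum_image (fun x _ y _ h => toPtn_injective h)).symm

lemma card_Pn (n : ℕ) : (Pn n).card = partcount n := by
  rw [Pn, Finset.card_image_of_injective _ toPtn_injective, partcount]
  rfl

lemma sumM_add (a b : Multiset ℕ+) : sumM (a + b) = sumM a + sumM b := by
  simp [sumM]

lemma mem_pdivisors {l δ : Multiset ℕ+} : δ ∈ pdivisors l ↔ δ ≤ l := by
  rw [pdivisors, Multiset.mem_toFinset, Multiset.mem_powerset]

/-- `⟨σ⟩_q = ∑_{λ∈P} n_λ q^{|λ|}` where `σ(λ) := ∑_{δ|λ} n_δ`: in graded form, for every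
`n ≥ 0`, `∑_{λ⊢n} σ(λ) = ∑_{k=0}^{n} (∑_{δ⊢k} n_δ)·p(n−k)`. -/
theorem qbracket_sigma (n : ℕ) :
    (∑ p : n.Partition, ∑ δ ∈ pdivisors (toPtn p), nInt δ)
      = ∑ k ∈ Finset.range (n + 1),
          (∑ d : k.Partition, nInt (toPtn d)) * partcount (n - k) := by
  rw [sum_Pn (fun l => ∑ δ ∈ pdivisors l, nInt δ)]
  have hr : ∀ k ∈ Finset.range (n + 1),
      (∑ d : k.Partition, nInt (toPtn d)) * partcount (n - k)
        = ∑ y ∈ Pn k ×ˢ Pn (n - k), nInt y.1 := by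
    intro k _
    rw [sum_Pn (fun l => nInt l), ← card_Pn, Finset.sum_mul, Finset.sum_product]
    exact Finset.sum_congr rfl fun δ _ => by simp [mul_comm]
  rw [Finset.sum_congr rfl hr, Finset.sum_sigma' (Pn n) (fun l => pdivisors l) (fun _ δ => nInt δ),
    Finset.sum_sigma' (Finset.range (n + 1)) (fun k => Pn k ×ˢ Pn (n - k)) (fun _ y => nInt y.1)]
  refine Finset.sum_nbij' (fun x => ⟨sumM x.2, x.2, x.1 - x.2⟩)
    (fun y => ⟨y.2.1 + y.2.2, y.2.1⟩) ?_ ?_ ?_ ?_ ?_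
  · rintro ⟨l, δ⟩ h
    rw [Finset.mem_sigma, mem_Pn, mem_pdivisors] at h
    obtain ⟨hl, hle⟩ := h
    simp only at hl hle ⊢
    have hsplit : sumM δ + sumM (l - δ) = n := by
      rw [← sumM_add, add_comm δ, tsub_add_cancel_of_le hle, hl]
    rw [Finset.mem_sigma, Finset.mem_product, Finset.mem_range, mem_Pn, mem_Pn]
    refine ⟨Nat.lt_succ_of_le (Nat.le.intro hsplit), rfl, ?_⟩
    show sumM (l - δ) = n - sumM δ
    omega
  · rintro ⟨k, δ, μ⟩ h
    rw [Finset.mem_sigma, Finset.mem_product, Finset.mem_range, mem_Pn, mem_Pn] at h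
    obtain ⟨hk, hδ, hμ⟩ := h
    simp only at hk hδ hμ ⊢
    rw [Finset.mem_sigma, mem_Pn, mem_pdivisors, sumM_add, hδ, hμ]
    exact ⟨by omega, Multiset.le_add_right _ _⟩
  · rintro ⟨l, δ⟩ h
    rw [Finset.mem_sigma, mem_Pn, mem_pdivisors] at h
    refine Sigma.ext ?_ HEq.rfl
    show δ + (l - δ) = l
    rw [add_comm, tsub_add_cancel_of_le h.2]
  · rintro ⟨k, δ, μ⟩ h
    rw [Finset.mem_sigma, Finset.mem_product, Finset.mem_range, mem_Pn, mem_Pn] at h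
    obtain ⟨hk, hδ, hμ⟩ := h
    refine Sigma.ext (by simpa using hδ) (heq_of_eq ?_)
    show (δ, δ + μ - δ) = (δ, μ)
    rw [add_tsub_cancel_left]
  · rintro ⟨l, δ⟩ _; rfl
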